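/- Let p be a prime with p ≡ 1 (mod 8) and let x, y be positive integers with p = x² − 32·y². Then 2^{(p−1)/4} ≡ (−1)^{(p−9)/8} (mod p) if and only if x ≡ 3 (mod 4). -/

import Mathlib

/-- for a prime `p ≡ 1 (mod 8)` with `p = x² − 32y²` (`x, y > 0`), one has
`2^{(p−1)/4} ≡ (−1)^{(p−9)/8} (mod p)` iff `x ≡ 3 (mod 4)`. -/
theorem stmt_14 (p : ℕ) (hp : p.Prime) (h8 : p % 8 = 1)
    (x y : ℕ) (hx : 0 < x) (hy : 0 < y)
    (hxy : (p : ℤ) = (x : ℤ) ^ 2 - 32 * (y : ℤ) ^ 2) :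
    (2 : ZMod p) ^ ((p - 1) / 4) = (-1 : ZMod p) ^ ((p - 9) / 8) ↔ x % 4 = 3 := by
  haveI : Fact p.Prime := ⟨hp⟩
  have hp1 : p ≠ 1 := hp.one_lt.ne'
  have hp9 : p ≠ 9 := by rintro rfl; norm_num at hp
  have hp17 : 17 ≤ p := by omega
  haveI : Fact (2 < p) := ⟨by omega⟩
  -- x is odd
  have hxodd : x % 2 = 1 := by
    rcases Nat.even_or_odd x with he | ho
    · exfalso
      obtain ⟨a, rfl⟩ := he
      have h2 : (2:ℤ) ∣ (p:ℤ) := ⟨2*a^2 - 16*y^2, by rw [hxy]; push_cast; ring⟩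
      have : (2:ℕ) ∣ p := by exact_mod_cast h2
      have := (Nat.prime_dvd_prime_iff_eq Nat.prime_two hp).mp this
      omega
    · exact Nat.odd_iff.mp ho
  have hOx : Odd x := Nat.odd_iff.mpr hxodd
  have hp4 : p % 4 = 1 := by omega
  -- gcd x y = 1
  have hco : Nat.Coprime x y := by
    have hd2 : (Nat.gcd x y)^2 ∣ p := by
      have : ((Nat.gcd x y : ℤ))^2 ∣ (p:ℤ) := by
        rw [hxy]
        exact dvd_sub (pow_dvd_pow_of_dvd (Int.natCast_dvd_natCast.mpr (Nat.gcd_dvd_left x y)) 2)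
          (Dvd.dvd.mul_left (pow_dvd_pow_of_dvd (Int.natCast_dvd_natCast.mpr (Nat.gcd_dvd_right x y)) 2) 32)
      exact_mod_cast this
    rcases (Nat.Prime.eq_one_or_self_of_dvd hp _ (dvd_trans (dvd_pow_self _ two_ne_zero) hd2)) with h | h
    · exact h
    · exfalso
      have : p^2 ∣ p := h ▸ hd2
      have := Nat.le_of_dvd (by omega) this
      nlinarith
  -- J(m | p) = 1 for every divisor m of y
  have hJy : ∀ m : ℕ, m ∣ y → jacobiSym (m : ℤ) p = 1 := by
    intro m hm
    have hm0 : m ≠ 0 := by rintro rfl; exact absurd (Nat.eq_zero_of_zero_dvd hm) (by omega)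
    obtain ⟨k, m', hm'odd, rfl⟩ := Nat.exists_eq_two_pow_mul_odd hm0
    have h2p : jacobiSym (2 : ℤ) p = 1 := by
      rw [jacobiSym.at_two (Nat.odd_iff.mpr (by omega))]
      rw [ZMod.χ₈_nat_eq_if_mod_eight]
      have hp2 : p % 2 = 1 := by omega
      simp [h8, hp2]
    have hm'dvd : m' ∣ y := dvd_trans (Dvd.intro_left _ rfl) hm
    obtain ⟨t, ht⟩ := hm'dvd
    have hxm' : Nat.Coprime x m' := Nat.Coprime.coprime_dvd_right ⟨t, ht⟩ hco
    have hJm' : jacobiSym (m' : ℤ) p = 1 := by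
      rw [jacobiSym.quadratic_reciprocity_one_mod_four' hm'odd hp4]
      have hmod : (p:ℤ) % m' = ((x:ℤ)^2) % m' := by
        have : (p:ℤ) = (x:ℤ)^2 + (m':ℤ) * (-(32 * m' * t^2)) := by
          rw [hxy, ht]; push_cast; ring
        rw [this, Int.add_mul_emod_self_left]
      rw [jacobiSym.mod_left ((p:ℤ)), hmod, ← jacobiSym.mod_left]
      exact jacobiSym.sq_one' (by simpa using hxm')
    push_cast
    rw [jacobiSym.mul_left, jacobiSym.pow_left, h2p, one_pow, one_mul]
    exact hJm'
  -- J(4y | p) = 1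
  have hJ4y : jacobiSym ((4 * y : ℕ) : ℤ) p = 1 := by
    push_cast
    rw [jacobiSym.mul_left]
    have h4 : jacobiSym (4 : ℤ) p = 1 := by
      have : (4:ℤ) = 2^2 := by norm_num
      rw [this]
      apply jacobiSym.sq_one'
      have h2p : Nat.Coprime 2 p := (Nat.Prime.coprime_iff_not_dvd Nat.prime_two).mpr (by omega)
      exact_mod_cast h2p
    rw [h4, one_mul]
    exact_mod_cast hJy y dvd_rfl
  -- J(x | p) = χ₈' x
  have hJx : jacobiSym (x : ℤ) p = ZMod.χ₈' x := by
    rw [← jacobiSym.quadratic_reciprocity_one_mod_four hp4 hOx]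
    have hmod : (p:ℤ) % x = (-2 * (4*y:ℤ)^2) % x := by
      have : (p:ℤ) = -2 * (4*y:ℤ)^2 + (x:ℤ) * x := by rw [hxy]; ring
      rw [this, Int.add_mul_emod_self_left]
    rw [jacobiSym.mod_left ((p:ℤ)), hmod, ← jacobiSym.mod_left, jacobiSym.mul_left]
    have hgcd : ((4*y:ℤ)).gcd x = 1 := by
      have : Nat.Coprime (4*y) x := by
        apply Nat.Coprime.mul
        · have c2 : Nat.Coprime 2 x := (Nat.Prime.coprime_iff_not_dvd Nat.prime_two).mpr (by omega)
          have c4 := Nat.Coprime.pow_left 2 c2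
          norm_num at c4
          exact c4
        · exact hco.symm
      rw [show (4*(y:ℤ)) = ((4*y : ℕ) : ℤ) by push_cast; ring]
      exact this
    rw [jacobiSym.sq_one' hgcd, jacobiSym.at_neg_two hOx, mul_one]
  -- main character identity: 2^((p-1)/4) = χ₈' x in ZMod p
  have key : (2 : ZMod p) ^ ((p - 1) / 4) = ((ZMod.χ₈' x : ℤ) : ZMod p) := by
    set e := (p - 1) / 4 with he
    have hpe : p / 2 = 2 * e := by omega
    have h1 : ((x : ZMod p))^2 = 32 * (y : ZMod p)^2 := by
      have h2 := congrArg (fun z : ℤ => (z : ZMod p)) hxy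
      push_cast at h2
      rw [ZMod.natCast_self] at h2
      linear_combination -h2
    have h4y1 : ((4 * y : ℕ) : ZMod p) ^ (2 * e) = 1 := by
      have := legendreSym.eq_pow p ((4*y : ℕ) : ℤ)
      rw [jacobiSym.legendreSym.to_jacobiSym, hJ4y, hpe] at this
      push_cast at this ⊢
      exact this.symm
    have hxe : ((x : ℕ) : ZMod p) ^ (2 * e) = ((ZMod.χ₈' x : ℤ) : ZMod p) := by
      have := legendreSym.eq_pow p ((x : ℕ) : ℤ)
      rw [jacobiSym.legendreSym.to_jacobiSym, hJx, hpe] at this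
      push_cast at this ⊢
      exact this.symm
    calc (2 : ZMod p) ^ e = (2 : ZMod p) ^ e * ((4 * y : ℕ) : ZMod p) ^ (2 * e) := by
          rw [h4y1, mul_one]
      _ = (2 * ((4 * y : ℕ) : ZMod p)^2) ^ e := by rw [pow_mul, mul_pow]
      _ = (((x:ℕ) : ZMod p)^2) ^ e := by
          congr 1
          push_cast
          rw [h1]; ring
      _ = ((x : ℕ) : ZMod p) ^ (2 * e) := by rw [pow_mul]
      _ = _ := hxe
  -- natural number form of hxy
  have hN : x ^ 2 = p + 32 * y ^ 2 := by
    have : (x:ℤ)^2 = (p:ℤ) + 32 * (y:ℤ)^2 := by linarith [hxy]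
    exact_mod_cast this
  -- case on x % 8
  have hx8 : x % 8 = 1 ∨ x % 8 = 3 ∨ x % 8 = 5 ∨ x % 8 = 7 := by omega
  have hNN : x * x = p + 32 * (y * y) := by
    have := hN
    simp only [pow_two] at this
    exact this
  rw [key]
  rcases hx8 with hr | hr | hr | hr
  · -- x ≡ 1: χ₈' x = 1, (p-9)/8 odd, x%4 = 1
    have hchi : ZMod.χ₈' x = 1 := by
      rw [ZMod.χ₈'_nat_eq_if_mod_eight]; simp [hr, hxodd]
    have hpar : ((p - 9) / 8) % 2 = 1 := by
      obtain ⟨a, ha⟩ : ∃ a, x = 8 * a + 1 := ⟨x / 8, by omega⟩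
      have h4 : x * x = 64 * (a * a) + 16 * a + 1 := by rw [ha]; ring
      have h3 : p + 32 * (y * y) = 64 * (a * a) + 16 * a + 1 := by omega
      generalize a * a = A at h3
      generalize y * y = Y at h3
      omega
    rw [hchi, Odd.neg_one_pow (Nat.odd_iff.mpr hpar)]
    push_cast
    constructor
    · intro h; exact absurd h.symm (ZMod.neg_one_ne_one)
    · intro h; exfalso; omega
  · have hchi : ZMod.χ₈' x = 1 := by
      rw [ZMod.χ₈'_nat_eq_if_mod_eight]; simp [hr, hxodd]
    have hpar : ((p - 9) / 8) % 2 = 0 := by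
      obtain ⟨a, ha⟩ : ∃ a, x = 8 * a + 3 := ⟨x / 8, by omega⟩
      have h4 : x * x = 64 * (a * a) + 48 * a + 9 := by rw [ha]; ring
      have h3 : p + 32 * (y * y) = 64 * (a * a) + 48 * a + 9 := by omega
      generalize a * a = A at h3
      generalize y * y = Y at h3
      omega
    rw [hchi, Even.neg_one_pow (Nat.even_iff.mpr hpar)]
    push_cast
    simp [show x % 4 = 3 by omega]
  · have hchi : ZMod.χ₈' x = -1 := by
      rw [ZMod.χ₈'_nat_eq_if_mod_eight]; simp [hr, hxodd]
    have hpar : ((p - 9) / 8) % 2 = 0 := by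
      obtain ⟨a, ha⟩ : ∃ a, x = 8 * a + 5 := ⟨x / 8, by omega⟩
      have h4 : x * x = 64 * (a * a) + 80 * a + 25 := by rw [ha]; ring
      have h3 : p + 32 * (y * y) = 64 * (a * a) + 80 * a + 25 := by omega
      generalize a * a = A at h3
      generalize y * y = Y at h3
      omega
    rw [hchi, Even.neg_one_pow (Nat.even_iff.mpr hpar)]
    push_cast
    constructor
    · intro h; exact absurd h (ZMod.neg_one_ne_one)
    · intro h; exfalso; omega
  · have hchi : ZMod.χ₈' x = -1 := by
      rw [ZMod.χ₈'_nat_eq_if_mod_eight]; simp [hr, hxodd]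
    have hpar : ((p - 9) / 8) % 2 = 1 := by
      obtain ⟨a, ha⟩ : ∃ a, x = 8 * a + 7 := ⟨x / 8, by omega⟩
      have h4 : x * x = 64 * (a * a) + 112 * a + 49 := by rw [ha]; ring
      have h3 : p + 32 * (y * y) = 64 * (a * a) + 112 * a + 49 := by omega
      generalize a * a = A at h3
      generalize y * y = Y at h3
      omega
    rw [hchi, Odd.neg_one_pow (Nat.odd_iff.mpr hpar)]
    push_cast
    simp [show x % 4 = 3 by omega]
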